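/- arXiv:2509.15074 — 2 statements merged into one kernel-verified Lean document; each statement's English description precedes it below -/
import Mathlib

section
/- For every loop-free ReDiP program P (including iid statements) and every PGA A over V, the translated automaton ⟦P⟧(A) is again a PGA over V; that is, the translation of Table 2 is an endofunction on probability generating automata (mass(⟦P⟧(A)) ≤ 1 whenever mass(A) ≤ 1). -/
open scoped ENNReal
open Classical

/-- Weighted automata over a commutative alphabet `V` with weights in `ℝ≥0∞`. -/
structure WA (V : Type) where
  Q : Type
  [fin : Fintype Q]
  [dec : DecidableEq Q]
  w : Q → Q → ℝ≥0∞
  lab : Q → Q → Option V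
  I : Q → ℝ≥0∞
  F : Q → ℝ≥0∞

attribute [instance] WA.fin WA.dec

variable {V : Type} [Fintype V] [DecidableEq V]

/-- Weight of a path of length `n`. -/
noncomputable def WA.pathWeight (A : WA V) {n : ℕ} (p : Fin (n + 1) → A.Q) : ℝ≥0∞ :=
  A.I (p 0) * (∏ i : Fin n, A.w (p i.castSucc) (p i.succ)) * A.F (p (Fin.last n))

/-- Parikh image of a path: the number of `X`-labeled transitions, for each `X : V`. -/
def WA.parikh (A : WA V) {n : ℕ} (p : Fin (n + 1) → A.Q) : V → ℕ := fun X =>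
  (Finset.univ.filter fun i : Fin n => A.lab (p i.castSucc) (p i.succ) = some X).card

/-- Behavior of a weighted automaton, as a map from valuations to `ℝ≥0∞`. -/
noncomputable def WA.behavior (A : WA V) (σ : V → ℕ) : ℝ≥0∞ :=
  ∑' (n : ℕ) (p : {p : Fin (n + 1) → A.Q // A.parikh p = σ}), A.pathWeight p.1

/-- Total mass of a weighted automaton. -/
noncomputable def WA.mass (A : WA V) : ℝ≥0∞ :=
  ∑' σ : V → ℕ, A.behavior σ

/-- Number of transitions with nonzero weight. -/
noncomputable def WA.size (A : WA V) : ℕ :=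
  Nat.card {qr : A.Q × A.Q // A.w qr.1 qr.2 ≠ 0}

/-- Deterministic finite automata over alphabet `V` with a finite state type. -/
structure DFA' (V : Type) where
  S : Type
  [fin : Fintype S]
  [dec : DecidableEq S]
  step : S → V → S
  start : S
  accept : Finset S

attribute [instance] DFA'.fin DFA'.dec

def DFA'.Accepts (B : DFA' V) (w : List V) : Prop :=
  w.foldl B.step B.start ∈ B.accept

/-- The language of `B` is closed under permutations of letters. -/
def DFA'.PermClosed (B : DFA' V) : Prop :=
  ∀ w₁ w₂ : List V, w₁.Perm w₂ → (B.Accepts w₁ ↔ B.Accepts w₂)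

/-- Parikh image of a word. -/
def parikhWord (w : List V) : V → ℕ := fun X => w.count X

/-- Product of a weighted automaton with a DFA. -/
noncomputable def WA.prodDFA (A : WA V) (B : DFA' V) : WA V where
  Q := A.Q × B.S
  w := fun a b =>
    match A.lab a.1 b.1 with
    | some X => if b.2 = B.step a.2 X then A.w a.1 b.1 else 0
    | none => if b.2 = a.2 then A.w a.1 b.1 else 0
  lab := fun a b => A.lab a.1 b.1
  I := fun a => if a.2 = B.start then A.I a.1 else 0
  F := fun a => if a.2 ∈ B.accept then A.F a.1 else 0

/-- `A[X/1]`: relabel every `X`-transition to an `ε`-transition. -/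
def WA.subst1 (A : WA V) (X : V) : WA V :=
  { A with lab := fun q r => if A.lab q r = some X then none else A.lab q r }

/-- `A[X/0]`: set the weight of every `X`-labeled transition to `0`. -/
def WA.subst0 (A : WA V) (X : V) : WA V :=
  { A with w := fun q r => if A.lab q r = some X then 0 else A.w q r }

/-- Weighted disjoint union `A₁ ⊕_{p,q} A₂`. -/
noncomputable def WA.wsum (p q : ℝ≥0∞) (A₁ A₂ : WA V) : WA V where
  Q := A₁.Q ⊕ A₂.Q
  w := fun a b =>
    match a, b with
    | .inl q, .inl r => A₁.w q r
    | .inr q, .inr r => A₂.w q r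
    | _, _ => 0
  lab := fun a b =>
    match a, b with
    | .inl q, .inl r => A₁.lab q r
    | .inr q, .inr r => A₂.lab q r
    | _, _ => none
  I := Sum.elim (fun s => p * A₁.I s) (fun s => q * A₂.I s)
  F := Sum.elim A₁.F A₂.F

/-- Concatenation `A₁ • A₂`. -/
noncomputable def WA.concat (A₁ A₂ : WA V) : WA V where
  Q := A₁.Q ⊕ A₂.Q
  w := fun a b =>
    match a, b with
    | .inl q, .inl r => A₁.w q r
    | .inr s, .inr t => A₂.w s t
    | .inl q, .inr s => A₁.F q * A₂.I s
    | .inr _, .inl _ => 0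
  lab := fun a b =>
    match a, b with
    | .inl q, .inl r => A₁.lab q r
    | .inr s, .inr t => A₂.lab s t
    | _, _ => none
  I := Sum.elim A₁.I (fun _ => 0)
  F := Sum.elim (fun _ => 0) A₂.F

/-- Transition substitution `A₁[Y/A₂]`. -/
noncomputable def WA.tsubst (A₁ : WA V) (Y : V) (A₂ : WA V) : WA V where
  Q := A₁.Q ⊕ (A₁.Q × A₁.Q × A₂.Q)
  w := fun a b =>
    match a, b with
    | .inl q, .inl r => if A₁.lab q r = some Y then 0 else A₁.w q r
    | .inl q, .inr (q', r, s) =>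
        if q' = q ∧ A₁.lab q r = some Y then A₁.w q r * A₂.I s else 0
    | .inr (q, r, s), .inr (q', r', t) =>
        if q' = q ∧ r' = r then A₂.w s t else 0
    | .inr (q, r, s), .inl r' =>
        if r' = r ∧ A₁.lab q r = some Y then A₂.F s else 0
  lab := fun a b =>
    match a, b with
    | .inl q, .inl r => A₁.lab q r
    | .inr (_, _, s), .inr (_, _, t) => A₂.lab s t
    | _, _ => none
  I := Sum.elim A₁.I (fun _ => 0)
  F := Sum.elim A₁.F (fun _ => 0)

/-- The guard DFA `B_{X>0}`. -/
def BXpos (X : V) : DFA' V where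
  S := Bool
  step := fun s a => if a = X then true else s
  start := false
  accept := {true}

/-- The decrement automaton `A^{X--}`. -/
noncomputable def WA.decrA (A : WA V) (X : V) : WA V :=
  let P := A.prodDFA (BXpos X)
  WA.wsum 1 1
    { P with
      lab := fun a b =>
        if a.2 = false ∧ b.2 = true ∧ P.lab a b = some X then none else P.lab a b }
    (A.subst0 X)

/-- Convolution of two maps `(V → ℕ) → ℝ≥0∞`. -/
noncomputable def conv (f g : (V → ℕ) → ℝ≥0∞) : (V → ℕ) → ℝ≥0∞ := fun σ =>
  ∑' p : {p : (V → ℕ) × (V → ℕ) // p.1 + p.2 = σ}, f p.1.1 * g p.1.2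

/-- Indicator (Dirac) function of a valuation. -/
noncomputable def delta (τ : V → ℕ) : (V → ℕ) → ℝ≥0∞ := fun σ => if σ = τ then 1 else 0

/-- `k`-fold convolution power. -/
noncomputable def convPow (g : (V → ℕ) → ℝ≥0∞) : ℕ → ((V → ℕ) → ℝ≥0∞)
  | 0 => delta 0
  | k + 1 => conv (convPow g k) g

/-- Rectangular guards over `V`. -/
inductive Guard (V : Type) : Type where
  | lt : V → ℕ → Guard V
  | mod : V → (n m : ℕ) → n < m → Guard V
  | and : Guard V → Guard V → Guard V
  | not : Guard V → Guard V

/-- Satisfaction of a guard by a valuation. -/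
def Guard.sat : Guard V → (V → ℕ) → Prop
  | .lt X n, σ => σ X < n
  | .mod X n m _, σ => σ X % m = n
  | .and g₁ g₂, σ => g₁.sat σ ∧ g₂.sat σ
  | .not g, σ => ¬g.sat σ

/-- Number of atomic subformulas. -/
def Guard.atoms : Guard V → ℕ
  | .lt _ _ => 1
  | .mod _ _ _ _ => 1
  | .and g₁ g₂ => g₁.atoms + g₂.atoms
  | .not g => g.atoms

/-- All constants in the guard are at most `N`. -/
def Guard.constLe (N : ℕ) : Guard V → Prop
  | .lt _ n => n ≤ N
  | .mod _ n m _ => n ≤ N ∧ m ≤ N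
  | .and g₁ g₂ => g₁.constLe N ∧ g₂.constLe N
  | .not g => g.constLe N

/-- The counting DFA for `X < n`. -/
def ltDFA (X : V) (n : ℕ) : DFA' V where
  S := Fin (n + 1)
  step := fun s a => if a = X then (if h : s.1 < n then ⟨s.1 + 1, by omega⟩ else s) else s
  start := ⟨0, by omega⟩
  accept := Finset.univ.filter fun s => s.1 < n

/-- The counting DFA for `X ≡ n mod m`. -/
def modDFA (X : V) (n m : ℕ) (h : n < m) : DFA' V where
  S := Fin m
  step := fun s a => if a = X then ⟨(s.1 + 1) % m, Nat.mod_lt _ (by omega)⟩ else s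
  start := ⟨0, by omega⟩
  accept := {⟨n, h⟩}

/-- Product DFA. -/
def DFA'.inter (B C : DFA' V) : DFA' V where
  S := B.S × C.S
  step := fun s a => (B.step s.1 a, C.step s.2 a)
  start := (B.start, C.start)
  accept := B.accept ×ˢ C.accept

/-- Complement DFA. -/
def DFA'.compl (B : DFA' V) : DFA' V :=
  { B with accept := B.acceptᶜ }

/-- The guard DFA `B_φ`. -/
def Guard.dfa : Guard V → DFA' V
  | .lt X n => ltDFA X n
  | .mod X n m h => modDFA X n m h
  | .and g₁ g₂ => g₁.dfa.inter g₂.dfa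
  | .not g => g.dfa.compl

/-- Loop-free ReDiP programs; distributions are given by weighted automata. -/
inductive ReDiP (V : Type) : Type 1 where
  | setzero : V → ReDiP V
  | incrConst : V → ℕ → ReDiP V
  | incrDist : V → WA V → ReDiP V
  | incrVar : V → V → ReDiP V
  | iid : V → WA V → V → ReDiP V
  | decr : V → ReDiP V
  | choice : ℝ≥0∞ → ReDiP V → ReDiP V → ReDiP V
  | ite : Guard V → ReDiP V → ReDiP V → ReDiP V
  | observe : Guard V → ReDiP V
  | seq : ReDiP V → ReDiP V → ReDiP V

/-- A distribution automaton for variable `x`: mass exactly `1` and supported on `x`. -/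
def distWf (x : V) (D : WA V) : Prop :=
  D.mass = 1 ∧ ∀ σ : V → ℕ, D.behavior σ ≠ 0 → ∀ y : V, y ≠ x → σ y = 0

/-- Well-formedness of a ReDiP program. -/
def ReDiP.wf : ReDiP V → Prop
  | .incrDist x D => distWf x D
  | .iid x D _ => distWf x D
  | .choice p P₁ P₂ => p ≤ 1 ∧ P₁.wf ∧ P₂.wf
  | .ite _ P₁ P₂ => P₁.wf ∧ P₂.wf
  | .seq P₁ P₂ => P₁.wf ∧ P₂.wf
  | _ => True

/-- `P` contains no `iid` statements. -/
def ReDiP.noIid : ReDiP V → Prop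
  | .iid _ _ _ => False
  | .choice _ P₁ P₂ => P₁.noIid ∧ P₂.noIid
  | .ite _ P₁ P₂ => P₁.noIid ∧ P₂.noIid
  | .seq P₁ P₂ => P₁.noIid ∧ P₂.noIid
  | _ => True

/-- Program size. -/
def ReDiP.size : ReDiP V → ℕ
  | .choice _ P₁ P₂ => 1 + P₁.size + P₂.size
  | .ite _ P₁ P₂ => 1 + P₁.size + P₂.size
  | .seq P₁ P₂ => P₁.size + P₂.size
  | _ => 1

/-- The `(n+1)`-state chain of `X`-transitions (Dirac distribution `δ_n` on `X`). -/
noncomputable def chainX (X : V) (n : ℕ) : WA V where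
  Q := Fin (n + 1)
  w := fun i j => if j.1 = i.1 + 1 then 1 else 0
  lab := fun i j => if j.1 = i.1 + 1 then some X else none
  I := fun i => if i = ⟨0, by omega⟩ then 1 else 0
  F := fun i => if i = Fin.last n then 1 else 0

/-- The three-state chain with one `Y`-transition followed by one `X`-transition. -/
noncomputable def chainYX (Y X : V) : WA V where
  Q := Fin 3
  w := fun i j => if j.1 = i.1 + 1 then 1 else 0
  lab := fun i j => if j.1 = i.1 + 1 then (if i.1 = 0 then some Y else some X) else none
  I := fun i => if i = 0 then 1 else 0
  F := fun i => if i = Fin.last 2 then 1 else 0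

/-- The two-state automaton with a single `Y`-transition. -/
noncomputable def singleY (Y : V) : WA V := chainX Y 1

/-- The automata translation of a ReDiP program (Table 2). -/
noncomputable def ReDiP.sem : ReDiP V → WA V → WA V
  | .setzero x, A => A.subst1 x
  | .incrConst x n, A => A.concat (chainX x n)
  | .incrDist _ D, A => A.concat D
  | .incrVar x y, A => A.tsubst y (chainYX y x)
  | .iid _ D y, A => A.tsubst y ((singleY y).concat D)
  | .decr x, A => A.decrA x
  | .choice p P₁ P₂, A => WA.wsum p (1 - p) (P₁.sem A) (P₂.sem A)
  | .ite φ P₁ P₂, A =>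
      WA.wsum 1 1 (P₁.sem (A.prodDFA φ.dfa)) (P₂.sem (A.prodDFA (Guard.not φ).dfa))
  | .observe φ, A => A.prodDFA φ.dfa
  | .seq P₁ P₂, A => P₂.sem (P₁.sem A)

/-- The parameters (distribution automata sizes, constants, guard atoms) of `P` are
bounded by `d`, `N` and `η`, respectively. -/
def ReDiP.boundedBy (d N η : ℕ) : ReDiP V → Prop
  | .setzero _ => True
  | .incrConst _ n => n ≤ N
  | .incrDist _ D => D.size ≤ d
  | .incrVar _ _ => True
  | .iid _ D _ => D.size ≤ d
  | .decr _ => True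
  | .choice _ P₁ P₂ => P₁.boundedBy d N η ∧ P₂.boundedBy d N η
  | .ite φ P₁ P₂ =>
      φ.atoms ≤ η ∧ φ.constLe N ∧ P₁.boundedBy d N η ∧ P₂.boundedBy d N η
  | .observe φ => φ.atoms ≤ η ∧ φ.constLe N
  | .seq P₁ P₂ => P₁.boundedBy d N η ∧ P₂.boundedBy d N η

/-- Configurations of the operational Markov chain. -/
inductive Conf (V : Type) : Type 1 where
  | run : ReDiP V → (V → ℕ) → Conf V
  | term : (V → ℕ) → Conf V
  | err : Conf V

/-- One-step transition probabilities of the operational Markov chain from `⟨P, σ⟩`. -/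
noncomputable def pstep : ReDiP V → (V → ℕ) → Conf V → ℝ≥0∞
  | .setzero x, σ, c => if c = Conf.term (Function.update σ x 0) then 1 else 0
  | .incrConst x n, σ, c => if c = Conf.term (Function.update σ x (σ x + n)) then 1 else 0
  | .incrDist x D, σ, c =>
      ∑' n : ℕ,
        if c = Conf.term (Function.update σ x (σ x + n)) then
          D.behavior (fun y => if y = x then n else 0)
        else 0
  | .incrVar x y, σ, c => if c = Conf.term (Function.update σ x (σ x + σ y)) then 1 else 0
  | .iid _ _ _, _, _ => 0
  | .decr x, σ, c => if c = Conf.term (Function.update σ x (σ x - 1)) then 1 else 0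
  | .choice p P₁ P₂, σ, c =>
      (if c = Conf.run P₁ σ then p else 0) + (if c = Conf.run P₂ σ then 1 - p else 0)
  | .ite φ P₁ P₂, σ, c =>
      if φ.sat σ then (if c = Conf.run P₁ σ then 1 else 0)
      else (if c = Conf.run P₂ σ then 1 else 0)
  | .observe φ, σ, c =>
      if φ.sat σ then (if c = Conf.term σ then 1 else 0)
      else (if c = Conf.err then 1 else 0)
  | .seq P₁ P₂, σ, c =>
      match c with
      | .run Q σ' =>
          (if Q = P₂ then pstep P₁ σ (Conf.term σ') else 0) +
          (match Q with
           | .seq P₁' P₂' => if P₂' = P₂ then pstep P₁ σ (Conf.run P₁' σ') else 0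
           | _ => 0)
      | .term _ => 0
      | .err => pstep P₁ σ Conf.err

/-- Transition probabilities between configurations (terminal and error states are absorbing
with no outgoing transitions). -/
noncomputable def cstep : Conf V → Conf V → ℝ≥0∞
  | .run P σ, c => pstep P σ c
  | _, _ => 0

/-- Initial distribution of the operational Markov chain `M(A, P)`. -/
noncomputable def mcInit (A : WA V) (P : ReDiP V) : Conf V → ℝ≥0∞
  | .run P' σ => if P' = P then A.behavior σ else 0
  | _ => 0

/-- Reachability probability `Pr^{M(A,P)}(◇ t)`: the sum over all finite sequences of
configurations ending at `t` and avoiding `t` before, of the initial weight of the first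
configuration times the product of the transition probabilities. -/
noncomputable def reachProb (A : WA V) (P : ReDiP V) (t : Conf V) : ℝ≥0∞ :=
  ∑' (k : ℕ)
      (p : {p : Fin (k + 1) → Conf V //
            p (Fin.last k) = t ∧ ∀ i : Fin k, p i.castSucc ≠ t}),
    mcInit A P (p.1 0) * ∏ i : Fin k, cstep (p.1 i.castSucc) (p.1 i.succ)


set_option linter.unusedSectionVars false
section MatrixStar
variable {ι : Type} [Fintype ι] [DecidableEq ι]

noncomputable def mstar (W : Matrix ι ι ℝ≥0∞) : Matrix ι ι ℝ≥0∞ :=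
  Matrix.of fun i j => ∑' n : ℕ, (W ^ n) i j

lemma mstar_apply (W : Matrix ι ι ℝ≥0∞) (i j : ι) : mstar W i j = ∑' n : ℕ, (W ^ n) i j := rfl

lemma mul_tsum_mat (W : Matrix ι ι ℝ≥0∞) (f : ℕ → Matrix ι ι ℝ≥0∞) (i j : ι) :
    (W * Matrix.of fun i j => ∑' n : ℕ, f n i j) i j = ∑' n : ℕ, (W * f n) i j := by
  simp only [Matrix.mul_apply, Matrix.of_apply]
  simp_rw [← ENNReal.tsum_mul_left]
  rw [← tsum_fintype (L := SummationFilter.unconditional _), ENNReal.tsum_comm]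
  exact tsum_congr fun n => by rw [tsum_fintype]

lemma mstar_fix (W : Matrix ι ι ℝ≥0∞) : mstar W = 1 + W * mstar W := by
  ext i j
  rw [mstar_apply, tsum_eq_zero_add' (ENNReal.summable)]
  simp only [pow_zero, Matrix.add_apply]
  congr 1
  rw [show (W * mstar W) = (W * Matrix.of fun i j => ∑' n : ℕ, (W ^ n) i j) from rfl,
    mul_tsum_mat]
  congr 1; ext n; rw [← pow_succ']

lemma mat_mul_mono {W W' X X' : Matrix ι ι ℝ≥0∞} (h1 : ∀ i j, W i j ≤ W' i j)
    (h2 : ∀ i j, X i j ≤ X' i j) : ∀ i j, (W * X) i j ≤ (W' * X') i j := by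
  intro i j
  simp only [Matrix.mul_apply]
  exact Finset.sum_le_sum fun k _ => mul_le_mul' (h1 i k) (h2 k j)

lemma mat_pow_mono {W W' : Matrix ι ι ℝ≥0∞} (h : ∀ i j, W i j ≤ W' i j) (n : ℕ) :
    ∀ i j, (W ^ n) i j ≤ (W' ^ n) i j := by
  induction n with
  | zero => intro i j; simp
  | succ n ih => intro i j; rw [pow_succ, pow_succ]; exact mat_mul_mono ih h i j

lemma mstar_mono {W W' : Matrix ι ι ℝ≥0∞} (h : ∀ i j, W i j ≤ W' i j) :
    ∀ i j, mstar W i j ≤ mstar W' i j := fun i j =>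
  ENNReal.tsum_le_tsum fun n => mat_pow_mono h n i j

lemma mstar_le_fix {W X : Matrix ι ι ℝ≥0∞} (h : ∀ i j, (1 + W * X) i j ≤ X i j) :
    ∀ i j, mstar W i j ≤ X i j := by
  have key : ∀ N i j, (∑ n ∈ Finset.range N, W ^ n) i j ≤ X i j := by
    intro N
    induction N with
    | zero => intro i j; simp
    | succ N ih =>
      intro i j
      rw [Finset.sum_range_succ']
      have : (∑ k ∈ Finset.range N, W ^ (k + 1)) = W * ∑ k ∈ Finset.range N, W ^ k := by
        rw [Finset.mul_sum]; congr 1; ext k; rw [pow_succ']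
      rw [this]
      refine le_trans ?_ (h i j)
      simp only [Matrix.add_apply, pow_zero]
      rw [add_comm]
      gcongr
      · exact mat_mul_mono (fun _ _ => le_rfl) ih i j
  intro i j
  rw [mstar_apply, ENNReal.tsum_eq_iSup_sum]
  refine iSup_le fun s => ?_
  obtain ⟨N, hN⟩ := Finset.exists_nat_subset_range s
  calc ∑ n ∈ s, (W ^ n) i j ≤ ∑ n ∈ Finset.range N, (W ^ n) i j :=
        Finset.sum_le_sum_of_subset hN
    _ = (∑ n ∈ Finset.range N, W ^ n) i j := by
        simp [Matrix.sum_apply]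
    _ ≤ X i j := key N i j

end MatrixStar
lemma schur_aux {α β : Type} [Fintype α] [Fintype β] [DecidableEq α] [DecidableEq β]
    (A : Matrix α α ℝ≥0∞) (U : Matrix α β ℝ≥0∞) (L : Matrix β α ℝ≥0∞) (B : Matrix β β ℝ≥0∞)
    (T : Matrix β β ℝ≥0∞) (Z : Matrix α α ℝ≥0∞)
    (hT : T = 1 + B * T) (hZ : Z = 1 + (A + U * T * L) * Z) :
    ∀ i j, mstar (Matrix.fromBlocks A U L B) i j ≤
      Matrix.fromBlocks Z (Z * U * T) (T * L * Z) (T + T * L * Z * U * T) i j := by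
  have e21' : L * Z + B * (T * L * Z) = T * L * Z := by
    conv_rhs => rw [hT]
    simp only [Matrix.add_mul, Matrix.mul_add, Matrix.one_mul, Matrix.mul_assoc]
  have e11 : (1 : Matrix α α ℝ≥0∞) + (A * Z + U * (T * L * Z)) = Z := by
    conv_rhs => rw [hZ, Matrix.add_mul]
    simp only [Matrix.mul_assoc]
  have e12 : (0 : Matrix α β ℝ≥0∞) + (A * (Z * U * T) + U * (T + T * L * Z * U * T))
      = Z * U * T := by
    conv_rhs => rw [hZ]
    simp only [Matrix.add_mul, Matrix.mul_add, Matrix.one_mul, Matrix.mul_assoc, Matrix.zero_mul, zero_add]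
    abel
  have e21 : (0 : Matrix β α ℝ≥0∞) + (L * Z + B * (T * L * Z)) = T * L * Z := by
    rw [zero_add, e21']
  have e22 : (1 : Matrix β β ℝ≥0∞) + (L * (Z * U * T) + B * (T + T * L * Z * U * T))
      = T + T * L * Z * U * T := by
    have step1 : (1 : Matrix β β ℝ≥0∞) + (L * (Z * U * T) + B * (T + T * L * Z * U * T))
        = (1 + B * T) + (L * Z + B * (T * L * Z)) * (U * T) := by
      simp only [Matrix.add_mul, Matrix.mul_add, Matrix.mul_assoc]
      abel
    rw [step1, e21', ← hT]
    simp only [Matrix.mul_assoc]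
  apply mstar_le_fix
  intro i j
  apply le_of_eq
  rw [Matrix.fromBlocks_multiply, ← Matrix.fromBlocks_one, Matrix.fromBlocks_add,
    e11, e12, e21, e22]

lemma schur {α β : Type} [Fintype α] [Fintype β] [DecidableEq α] [DecidableEq β]
    (A : Matrix α α ℝ≥0∞) (U : Matrix α β ℝ≥0∞) (L : Matrix β α ℝ≥0∞) (B : Matrix β β ℝ≥0∞) :
    ∀ i j, mstar (Matrix.fromBlocks A U L B) i j ≤
      Matrix.fromBlocks (mstar (A + U * mstar B * L))
        (mstar (A + U * mstar B * L) * U * mstar B)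
        (mstar B * L * mstar (A + U * mstar B * L))
        (mstar B + mstar B * L * mstar (A + U * mstar B * L) * U * mstar B) i j :=
  schur_aux A U L B (mstar B) (mstar (A + U * mstar B * L)) (mstar_fix B) (mstar_fix _)
section WAMass
variable {V : Type} [Fintype V] [DecidableEq V]

/-- The weight matrix of a weighted automaton. -/
noncomputable def WA.Mat (A : WA V) : Matrix A.Q A.Q ℝ≥0∞ := Matrix.of A.w

lemma pathSum_aux {Q : Type} [Fintype Q] [DecidableEq Q] (w : Q → Q → ℝ≥0∞) (F : Q → ℝ≥0∞) :
    ∀ (n : ℕ) (I : Q → ℝ≥0∞),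
      ∑ p : Fin (n + 1) → Q,
        I (p 0) * (∏ i : Fin n, w (p i.castSucc) (p i.succ)) * F (p (Fin.last n))
      = dotProduct I (((Matrix.of w) ^ n).mulVec F) := by
  intro n
  induction n with
  | zero =>
    intro I
    rw [← Equiv.sum_comp (Equiv.funUnique (Fin 1) Q).symm]
    simp [dotProduct, Matrix.mulVec, Matrix.one_apply, Finset.sum_ite_eq,
      mul_ite, ite_mul]
  | succ n ih =>
    intro I
    rw [← Equiv.sum_comp (Fin.consEquiv (fun _ => Q)), Fintype.sum_prod_type]
    have hbody : ∀ (q : Q) (f : Fin (n + 1) → Q),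
        (I ((Fin.cons q f : Fin (n + 2) → Q) 0) *
          (∏ i : Fin (n + 1), w ((Fin.cons q f : Fin (n + 2) → Q) i.castSucc)
            ((Fin.cons q f : Fin (n + 2) → Q) i.succ)) *
          F ((Fin.cons q f : Fin (n + 2) → Q) (Fin.last (n + 1))))
        = (I q * w q (f 0)) * (∏ i : Fin n, w (f i.castSucc) (f i.succ)) * F (f (Fin.last n)) := by
      intro q f
      rw [Fin.prod_univ_succ]
      have h1 : ∀ i : Fin n, (Fin.cons q f : Fin (n+2) → Q) (i.succ).castSucc = f i.castSucc := by
        intro i; rw [← Fin.succ_castSucc, Fin.cons_succ]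
      have h2 : (Fin.cons q f : Fin (n+2) → Q) (Fin.last (n+1)) = f (Fin.last n) := by
        rw [← Fin.succ_last, Fin.cons_succ]
      simp only [Fin.cons_succ, Fin.castSucc_zero, Fin.cons_zero, h1, h2,
        Fin.consEquiv_apply, mul_assoc]
    simp only [Fin.consEquiv_apply]
    simp only [hbody]
    rw [Finset.sum_comm]
    have hrow : ∀ f : Fin (n + 1) → Q,
        ∑ q : Q, (I q * w q (f 0)) * (∏ i : Fin n, w (f i.castSucc) (f i.succ)) * F (f (Fin.last n))
        = (Matrix.vecMul I (Matrix.of w)) (f 0) *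
            (∏ i : Fin n, w (f i.castSucc) (f i.succ)) * F (f (Fin.last n)) := by
      intro f
      rw [← Finset.sum_mul, ← Finset.sum_mul]
      rfl
    simp only [hrow]
    rw [ih]
    rw [← Matrix.dotProduct_mulVec, pow_succ', Matrix.mulVec_mulVec]

lemma WA.mass_eq (A : WA V) :
    A.mass = ∑' n : ℕ, dotProduct A.I ((A.Mat ^ n).mulVec A.F) := by
  rw [WA.mass]
  simp only [WA.behavior]
  rw [ENNReal.tsum_comm]
  congr 1
  ext n
  have h1 : (∑' (σ : V → ℕ) (p : {p : Fin (n + 1) → A.Q // A.parikh p = σ}),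
        A.pathWeight p.1)
      = ∑' (x : Σ σ : V → ℕ, {p : Fin (n + 1) → A.Q // A.parikh p = σ}),
          A.pathWeight x.2.1 :=
    (ENNReal.tsum_sigma'
      (fun x : Σ σ : V → ℕ, {p : Fin (n + 1) → A.Q // A.parikh p = σ} =>
        A.pathWeight x.2.1)).symm
  have h2 : (∑' (x : Σ σ : V → ℕ, {p : Fin (n + 1) → A.Q // A.parikh p = σ}),
        A.pathWeight x.2.1)
      = ∑' p : Fin (n + 1) → A.Q, A.pathWeight p := by
    have := Equiv.tsum_eq (Equiv.sigmaFiberEquiv (fun p : Fin (n + 1) → A.Q => A.parikh p))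
      (fun p => A.pathWeight p)
    exact this
  rw [h1, h2, tsum_fintype, show A.Mat = Matrix.of A.w from rfl,
    ← pathSum_aux A.w A.F n A.I]
  rfl
lemma tsum_sum_swap {ι : Type} [Fintype ι] (f : ℕ → ι → ℝ≥0∞) :
    ∑' n : ℕ, ∑ i : ι, f n i = ∑ i : ι, ∑' n : ℕ, f n i := by
  calc ∑' n : ℕ, ∑ i : ι, f n i = ∑' n : ℕ, ∑' i : ι, f n i :=
        tsum_congr fun n => (tsum_fintype _).symm
    _ = ∑' i : ι, ∑' n : ℕ, f n i := ENNReal.tsum_comm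
    _ = ∑ i : ι, ∑' n : ℕ, f n i := tsum_fintype _

lemma WA.mass_eq_star (A : WA V) :
    A.mass = ∑ q : A.Q, ∑ q' : A.Q, A.I q * mstar A.Mat q q' * A.F q' := by
  rw [A.mass_eq]
  have h1 : ∀ n : ℕ, dotProduct A.I ((A.Mat ^ n).mulVec A.F)
      = ∑ q : A.Q, ∑ q' : A.Q, A.I q * ((A.Mat ^ n) q q' * A.F q') := by
    intro n
    simp only [dotProduct, Matrix.mulVec, Finset.mul_sum, mul_assoc]
  simp only [h1]
  rw [tsum_sum_swap]
  refine Finset.sum_congr rfl fun q _ => ?_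
  rw [tsum_sum_swap]
  refine Finset.sum_congr rfl fun q' _ => ?_
  rw [ENNReal.tsum_mul_left, ENNReal.tsum_mul_right, mstar_apply, mul_assoc]

lemma WA.mass_le_sum (A : WA V) (X : Matrix A.Q A.Q ℝ≥0∞)
    (hX : ∀ i j, mstar A.Mat i j ≤ X i j) :
    A.mass ≤ ∑ q : A.Q, ∑ q' : A.Q, A.I q * X q q' * A.F q' := by
  rw [A.mass_eq_star]
  refine Finset.sum_le_sum fun q _ => Finset.sum_le_sum fun q' _ => ?_
  exact mul_le_mul' (mul_le_mul' le_rfl (hX q q')) le_rfl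

lemma WA.mass_relabel (A : WA V) (l : A.Q → A.Q → Option V) :
    WA.mass {A with lab := l} = A.mass := by
  rw [WA.mass_eq, WA.mass_eq]
  rfl

lemma WA.mass_subst1 (A : WA V) (x : V) : (A.subst1 x).mass = A.mass :=
  A.mass_relabel _

lemma WA.Mat_wsum (p q : ℝ≥0∞) (A₁ A₂ : WA V) :
    (WA.wsum p q A₁ A₂).Mat = Matrix.fromBlocks A₁.Mat 0 0 A₂.Mat := by
  ext i j
  cases i <;> cases j <;> rfl

lemma WA.mass_wsum (p q : ℝ≥0∞) (A₁ A₂ : WA V) :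
    (WA.wsum p q A₁ A₂).mass ≤ p * A₁.mass + q * A₂.mass := by
  have hs : ∀ i j, mstar (WA.wsum p q A₁ A₂).Mat i j ≤
      Matrix.fromBlocks (mstar A₁.Mat) 0 0 (mstar A₂.Mat) i j := by
    rw [WA.Mat_wsum]
    intro i j
    have := schur A₁.Mat 0 0 A₂.Mat i j
    simp [Matrix.zero_mul, Matrix.mul_zero, add_zero] at this
    convert this
    rfl
  refine le_trans (WA.mass_le_sum _ _ hs) ?_
  rw [A₁.mass_eq_star, A₂.mass_eq_star]
  have key : ∑ i : A₁.Q ⊕ A₂.Q, ∑ j : A₁.Q ⊕ A₂.Q,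
      (WA.wsum p q A₁ A₂).I i * Matrix.fromBlocks (mstar A₁.Mat) 0 0 (mstar A₂.Mat) i j *
        (WA.wsum p q A₁ A₂).F j
      = p * (∑ a : A₁.Q, ∑ a' : A₁.Q, A₁.I a * mstar A₁.Mat a a' * A₁.F a') +
        q * (∑ b : A₂.Q, ∑ b' : A₂.Q, A₂.I b * mstar A₂.Mat b b' * A₂.F b') := by
    simp only [Fintype.sum_sum_type, Matrix.fromBlocks_apply₁₁, Matrix.fromBlocks_apply₁₂,
      Matrix.fromBlocks_apply₂₁, Matrix.fromBlocks_apply₂₂, WA.wsum, Sum.elim_inl, Sum.elim_inr,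
      Matrix.zero_apply, mul_zero, zero_mul, Finset.sum_const_zero, add_zero, zero_add,
      Finset.mul_sum, mul_assoc]
  exact le_of_eq key

lemma WA.Mat_concat (A₁ A₂ : WA V) :
    (A₁.concat A₂).Mat = Matrix.fromBlocks A₁.Mat
      (Matrix.of fun q s => A₁.F q * A₂.I s) 0 A₂.Mat := by
  ext i j
  cases i <;> cases j <;> rfl
lemma dot_form {Q R : Type} [Fintype Q] [Fintype R] (I : Q → ℝ≥0∞) (F : R → ℝ≥0∞)
    (X : Matrix Q R ℝ≥0∞) :
    ∑ q : Q, ∑ q' : R, I q * X q q' * F q' = dotProduct I (X.mulVec F) := by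
  simp only [dotProduct, Matrix.mulVec, Finset.mul_sum, mul_assoc]

lemma WA.mass_eq_star' (A : WA V) :
    A.mass = dotProduct A.I ((mstar A.Mat).mulVec A.F) := by
  rw [A.mass_eq_star, dot_form]

lemma WA.mass_concat (A₁ A₂ : WA V) : (A₁.concat A₂).mass ≤ A₁.mass * A₂.mass := by
  set U : Matrix A₁.Q A₂.Q ℝ≥0∞ := Matrix.of fun q s => A₁.F q * A₂.I s with hU
  have hs : ∀ i j, mstar (A₁.concat A₂).Mat i j ≤
      Matrix.fromBlocks (mstar A₁.Mat) (mstar A₁.Mat * U * mstar A₂.Mat) 0 (mstar A₂.Mat) i j := by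
    rw [WA.Mat_concat]
    intro i j
    have := schur A₁.Mat U 0 A₂.Mat i j
    simp [Matrix.zero_mul, Matrix.mul_zero, add_zero] at this
    convert this
    rfl
  refine le_trans (WA.mass_le_sum _ _ hs) ?_
  have key : ∑ i : A₁.Q ⊕ A₂.Q, ∑ j : A₁.Q ⊕ A₂.Q,
      (A₁.concat A₂).I i *
        Matrix.fromBlocks (mstar A₁.Mat) (mstar A₁.Mat * U * mstar A₂.Mat) 0 (mstar A₂.Mat) i j *
        (A₁.concat A₂).F j
      = ∑ q : A₁.Q, ∑ s : A₂.Q,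
          A₁.I q * (mstar A₁.Mat * U * mstar A₂.Mat) q s * A₂.F s := by
    simp only [Fintype.sum_sum_type, Matrix.fromBlocks_apply₁₁, Matrix.fromBlocks_apply₁₂,
      Matrix.fromBlocks_apply₂₁, Matrix.fromBlocks_apply₂₂, WA.concat, Sum.elim_inl, Sum.elim_inr,
      Matrix.zero_apply, mul_zero, zero_mul, Finset.sum_const_zero, add_zero, zero_add]
  refine le_of_eq (key.trans ?_)
  rw [dot_form]
  have hUv : U.mulVec ((mstar A₂.Mat).mulVec A₂.F) = A₂.mass • A₁.F := by
    funext q'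
    conv_rhs => rw [Pi.smul_apply, smul_eq_mul, mul_comm, A₂.mass_eq_star']
    simp only [Matrix.mulVec, dotProduct, hU, Matrix.of_apply, mul_assoc,
      Finset.mul_sum, Finset.sum_mul]
  rw [← Matrix.mulVec_mulVec, ← Matrix.mulVec_mulVec, hUv, Matrix.mulVec_smul,
    dotProduct_smul, smul_eq_mul, ← A₁.mass_eq_star', mul_comm]
section Tsubst
variable (A₁ : WA V) (Y : V) (A₂ : WA V)

private noncomputable def tsA : Matrix A₁.Q A₁.Q ℝ≥0∞ :=
  Matrix.of fun q r => if A₁.lab q r = some Y then 0 else A₁.w q r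
private noncomputable def tsU : Matrix A₁.Q (A₁.Q × A₁.Q × A₂.Q) ℝ≥0∞ :=
  Matrix.of fun q x => if x.1 = q ∧ A₁.lab q x.2.1 = some Y then A₁.w q x.2.1 * A₂.I x.2.2 else 0
private noncomputable def tsB : Matrix (A₁.Q × A₁.Q × A₂.Q) (A₁.Q × A₁.Q × A₂.Q) ℝ≥0∞ :=
  Matrix.of fun x y => if y.1 = x.1 ∧ y.2.1 = x.2.1 then A₂.w x.2.2 y.2.2 else 0
private noncomputable def tsL : Matrix (A₁.Q × A₁.Q × A₂.Q) A₁.Q ℝ≥0∞ :=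
  Matrix.of fun x r' => if r' = x.2.1 ∧ A₁.lab x.1 x.2.1 = some Y then A₂.F x.2.2 else 0

lemma Mat_tsubst : (A₁.tsubst Y A₂).Mat = Matrix.fromBlocks (tsA A₁ Y) (tsU A₁ Y A₂)
    (tsL A₁ Y A₂) (tsB A₁ A₂) := by
  ext i j
  rcases i with q | ⟨q, r, s⟩ <;> rcases j with r' | ⟨q', r', t⟩ <;> rfl

lemma tsB_mul_apply {κ : Type} [Fintype κ] (X : Matrix (A₁.Q × A₁.Q × A₂.Q) κ ℝ≥0∞)
    (x : A₁.Q × A₁.Q × A₂.Q) (y : κ) :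
    (tsB A₁ A₂ * X) x y = ∑ c : A₂.Q, A₂.w x.2.2 c * X (x.1, x.2.1, c) y := by
  rw [Matrix.mul_apply, Fintype.sum_prod_type]
  simp only [Fintype.sum_prod_type, tsB, Matrix.of_apply, ite_and, ite_mul, zero_mul,
    Finset.sum_ite_irrel, Finset.sum_const_zero, Finset.sum_ite_eq', Finset.mem_univ, if_true]

lemma tsB_star_le : ∀ x y, mstar (tsB A₁ A₂) x y ≤
    (if y.1 = x.1 ∧ y.2.1 = x.2.1 then mstar A₂.Mat x.2.2 y.2.2 else 0) := by
  have key := mstar_le_fix (W := tsB A₁ A₂)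
    (X := Matrix.of fun x y =>
      if y.1 = x.1 ∧ y.2.1 = x.2.1 then mstar A₂.Mat x.2.2 y.2.2 else 0) ?_
  · exact fun x y => key x y
  intro x y
  rw [Matrix.add_apply, Matrix.one_apply, tsB_mul_apply]
  simp only [Matrix.of_apply]
  by_cases h : y.1 = x.1 ∧ y.2.1 = x.2.1
  · simp only [h, and_self, if_true]
    have hfix : mstar A₂.Mat x.2.2 y.2.2 = (if x.2.2 = y.2.2 then (1:ℝ≥0∞) else 0) +
        ∑ c : A₂.Q, A₂.w x.2.2 c * mstar A₂.Mat c y.2.2 := by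
      conv_lhs => rw [mstar_fix A₂.Mat]
      simp [Matrix.add_apply, Matrix.one_apply, Matrix.mul_apply, WA.Mat]
    rw [hfix]
    refine add_le_add ?_ le_rfl
    by_cases hxy : x = y
    · simp [hxy]
    · simp [hxy]
  · have hxy : x ≠ y := fun hxy => h ⟨by rw [hxy], by rw [hxy]⟩
    simp [h, Ne.symm hxy, hxy]

end Tsubst
lemma tsSL_le (A₁ : WA V) (Y : V) (A₂ : WA V) (x : A₁.Q × A₁.Q × A₂.Q) (r : A₁.Q) :
    (mstar (tsB A₁ A₂) * tsL A₁ Y A₂) x r ≤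
      if r = x.2.1 ∧ A₁.lab x.1 x.2.1 = some Y then
        ∑ t : A₂.Q, mstar A₂.Mat x.2.2 t * A₂.F t else 0 := by
  rw [Matrix.mul_apply]
  refine le_trans (Finset.sum_le_sum fun y _ =>
    mul_le_mul' (tsB_star_le A₁ A₂ x y) le_rfl) ?_
  apply le_of_eq
  simp only [tsL, Matrix.of_apply, Fintype.sum_prod_type, ite_and, ite_mul, zero_mul,
    mul_ite, mul_zero, Finset.sum_ite_irrel, Finset.sum_const_zero, Finset.sum_ite_eq',
    Finset.mem_univ, if_true]
  rw [Fintype.sum_eq_single x.1 (fun b hb => Finset.sum_eq_zero fun c _ => by simp [hb]),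
    Fintype.sum_eq_single x.2.1 (fun c hc => by simp [hc])]
  simp

lemma tsUSL_le (A₁ : WA V) (Y : V) (A₂ : WA V) (q r : A₁.Q) :
    (tsU A₁ Y A₂ * (mstar (tsB A₁ A₂) * tsL A₁ Y A₂)) q r ≤
      if A₁.lab q r = some Y then A₁.w q r * A₂.mass else 0 := by
  rw [Matrix.mul_apply]
  refine le_trans (Finset.sum_le_sum fun x _ =>
    mul_le_mul' le_rfl (tsSL_le A₁ Y A₂ x r)) ?_
  have expand : ∀ x : A₁.Q × A₁.Q × A₂.Q,
      tsU A₁ Y A₂ q x *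
        (if r = x.2.1 ∧ A₁.lab x.1 x.2.1 = some Y then
          ∑ t : A₂.Q, mstar A₂.Mat x.2.2 t * A₂.F t else 0)
      = (if x.1 = q ∧ A₁.lab q x.2.1 = some Y then A₁.w q x.2.1 * A₂.I x.2.2 else 0) *
        (if r = x.2.1 ∧ A₁.lab x.1 x.2.1 = some Y then
          ∑ t : A₂.Q, mstar A₂.Mat x.2.2 t * A₂.F t else 0) := fun x => rfl
  simp only [expand]
  simp only [Fintype.sum_prod_type, ite_and, ite_mul, zero_mul, mul_ite, mul_zero,
    Finset.sum_ite_irrel, Finset.sum_const_zero, Finset.sum_ite_eq', Finset.sum_ite_eq,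
    Finset.mem_univ, if_true]
  by_cases hlab : A₁.lab q r = some Y <;> simp only [hlab, if_true, if_false, reduceIte]
  · rw [A₂.mass_eq_star]
    apply le_of_eq
    simp only [Finset.mul_sum, mul_assoc]
    rw [Fintype.sum_eq_single q (fun b hb => by simp [hb])]
    simp [hlab]
  · simp

lemma WA.mass_tsubst (A₁ : WA V) (Y : V) (A₂ : WA V) (h2 : A₂.mass ≤ 1) :
    (A₁.tsubst Y A₂).mass ≤ A₁.mass := by
  set Mfold := tsA A₁ Y + tsU A₁ Y A₂ * mstar (tsB A₁ A₂) * tsL A₁ Y A₂ with hMfold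
  have hM : ∀ i j, Mfold i j ≤ A₁.Mat i j := by
    intro q r
    rw [hMfold, Matrix.add_apply, Matrix.mul_assoc]
    refine le_trans (add_le_add le_rfl (tsUSL_le A₁ Y A₂ q r)) ?_
    by_cases hlab : A₁.lab q r = some Y
    · simp only [tsA, Matrix.of_apply, hlab, if_true, reduceIte, zero_add]
      calc A₁.w q r * A₂.mass ≤ A₁.w q r * 1 := mul_le_mul' le_rfl h2
        _ = A₁.Mat q r := by rw [mul_one]; rfl
    · simp only [tsA, Matrix.of_apply, hlab, if_false, reduceIte, add_zero]
      exact le_rfl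
  have hs : ∀ i j, mstar (A₁.tsubst Y A₂).Mat i j ≤
      Matrix.fromBlocks (mstar Mfold)
        (mstar Mfold * tsU A₁ Y A₂ * mstar (tsB A₁ A₂))
        (mstar (tsB A₁ A₂) * tsL A₁ Y A₂ * mstar Mfold)
        (mstar (tsB A₁ A₂) + mstar (tsB A₁ A₂) * tsL A₁ Y A₂ * mstar Mfold * tsU A₁ Y A₂ *
          mstar (tsB A₁ A₂)) i j := by
    rw [Mat_tsubst]
    exact schur _ _ _ _
  refine le_trans (WA.mass_le_sum _ _ hs) ?_
  have key : ∑ i : A₁.Q ⊕ (A₁.Q × A₁.Q × A₂.Q), ∑ j : A₁.Q ⊕ (A₁.Q × A₁.Q × A₂.Q),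
      (A₁.tsubst Y A₂).I i *
        Matrix.fromBlocks (mstar Mfold)
          (mstar Mfold * tsU A₁ Y A₂ * mstar (tsB A₁ A₂))
          (mstar (tsB A₁ A₂) * tsL A₁ Y A₂ * mstar Mfold)
          (mstar (tsB A₁ A₂) + mstar (tsB A₁ A₂) * tsL A₁ Y A₂ * mstar Mfold * tsU A₁ Y A₂ *
            mstar (tsB A₁ A₂)) i j *
        (A₁.tsubst Y A₂).F j
      = ∑ q : A₁.Q, ∑ q' : A₁.Q, A₁.I q * mstar Mfold q q' * A₁.F q' := by
    simp only [Fintype.sum_sum_type, Matrix.fromBlocks_apply₁₁, Matrix.fromBlocks_apply₁₂,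
      Matrix.fromBlocks_apply₂₁, Matrix.fromBlocks_apply₂₂, WA.tsubst, Sum.elim_inl,
      Sum.elim_inr, mul_zero, zero_mul, Finset.sum_const_zero, add_zero, zero_add]
  have hrest : ∑ q : A₁.Q, ∑ q' : A₁.Q, A₁.I q * mstar Mfold q q' * A₁.F q' ≤ A₁.mass := by
    rw [A₁.mass_eq_star]
    refine Finset.sum_le_sum fun q _ => Finset.sum_le_sum fun q' _ => ?_
    exact mul_le_mul' (mul_le_mul' le_rfl (mstar_mono hM q q')) le_rfl
  exact le_trans (le_of_eq key) hrest
noncomputable def WA.massN (A : WA V) (n : ℕ) : ℝ≥0∞ :=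
  ∑ q : A.Q, ∑ q' : A.Q, A.I q * (A.Mat ^ n) q q' * A.F q'

lemma WA.mass_eq' (A : WA V) : A.mass = ∑' n : ℕ, A.massN n := by
  rw [A.mass_eq]
  exact tsum_congr fun n => (dot_form _ _ _).symm

lemma prod_step_marginal (A : WA V) (B : DFA' V) (a : A.Q × B.S) (q' : A.Q) :
    ∑ s' : B.S, (A.prodDFA B).Mat a (q', s') = A.Mat a.1 q' := by
  show ∑ s' : B.S, (A.prodDFA B).w a (q', s') = A.w a.1 q'
  rcases hl : A.lab a.1 q' with _ | X <;>
    simp [WA.prodDFA, hl, Finset.sum_ite_eq', Finset.mem_univ]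

lemma prod_pow_marginal (A : WA V) (B : DFA' V) (n : ℕ) (q : A.Q) (s : B.S) (q' : A.Q) :
    ∑ s' : B.S, ((A.prodDFA B).Mat ^ n) (q, s) (q', s') = (A.Mat ^ n) q q' := by
  induction n generalizing q s q' with
  | zero =>
    rw [pow_zero, pow_zero]
    refine (Finset.sum_congr rfl fun x _ => Matrix.one_apply).trans ?_
    simp only [pow_zero, Matrix.one_apply, Prod.mk.injEq, ite_and, Finset.sum_ite_irrel,
      Finset.sum_const_zero, Finset.sum_ite_eq, Finset.mem_univ, if_true]
  | succ n ih =>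
    rw [pow_succ, pow_succ]
    have expand : ∀ s', (((A.prodDFA B).Mat ^ n) * (A.prodDFA B).Mat) (q, s) (q', s')
        = ∑ q'' : A.Q, ∑ s'' : B.S,
            ((A.prodDFA B).Mat ^ n) (q, s) (q'', s'') * (A.prodDFA B).Mat (q'', s'') (q', s') := by
      intro s'
      exact Matrix.mul_apply.trans (Fintype.sum_prod_type _)
    simp only [expand]
    rw [Finset.sum_comm]
    have hswap : ∀ q'' : A.Q,
        ∑ s' : B.S, ∑ s'' : B.S,
          ((A.prodDFA B).Mat ^ n) (q, s) (q'', s'') * (A.prodDFA B).Mat (q'', s'') (q', s')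
        = (A.Mat ^ n) q q'' * A.Mat q'' q' := by
      intro q''
      rw [Finset.sum_comm]
      have h1 : ∀ s'' : B.S,
          ∑ s' : B.S, ((A.prodDFA B).Mat ^ n) (q, s) (q'', s'') * (A.prodDFA B).Mat (q'', s'') (q', s')
          = ((A.prodDFA B).Mat ^ n) (q, s) (q'', s'') * A.Mat q'' q' := by
        intro s''
        rw [← Finset.mul_sum, prod_step_marginal]
      simp only [h1]
      rw [← Finset.sum_mul, ih]
    simp only [hswap]
    rw [← Matrix.mul_apply]
lemma prod_massN_red (A : WA V) (B : DFA' V) (n : ℕ) (G : A.Q → B.S → ℝ≥0∞) :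
    (∑ i : A.Q × B.S, ∑ j : A.Q × B.S,
      (A.prodDFA B).I i * ((A.prodDFA B).Mat ^ n) i j * G j.1 j.2)
    = ∑ q : A.Q, ∑ q' : A.Q, ∑ s' : B.S,
        A.I q * ((A.prodDFA B).Mat ^ n) (q, B.start) (q', s') * G q' s' := by
  have hI : ∀ (q : A.Q) (s : B.S),
      (A.prodDFA B).I (q, s) = if s = B.start then A.I q else 0 := fun _ _ => rfl
  simp only [Fintype.sum_prod_type, hI, ite_mul, zero_mul, Finset.sum_ite_irrel,
    Finset.sum_const_zero, Finset.sum_ite_eq', Finset.mem_univ, if_true]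

lemma prod_sum3_full (A : WA V) (B : DFA' V) (n : ℕ) :
    (∑ q : A.Q, ∑ q' : A.Q, ∑ s' : B.S,
      A.I q * ((A.prodDFA B).Mat ^ n) (q, B.start) (q', s') * A.F q')
    = A.massN n := by
  have hcol : ∀ (q q' : A.Q),
      ∑ s' : B.S, A.I q * ((A.prodDFA B).Mat ^ n) (q, B.start) (q', s') * A.F q'
      = A.I q * (A.Mat ^ n) q q' * A.F q' := by
    intro q q'
    rw [← Finset.sum_mul, ← Finset.mul_sum, prod_pow_marginal]
  simp only [hcol, WA.massN]

lemma massN_prod (A : WA V) (B : DFA' V) (n : ℕ) :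
    (A.prodDFA B).massN n = ∑ q : A.Q, ∑ q' : A.Q, ∑ s' : B.S,
      A.I q * ((A.prodDFA B).Mat ^ n) (q, B.start) (q', s') *
        (if s' ∈ B.accept then A.F q' else 0) := by
  have hF : ∀ j : A.Q × B.S,
      (A.prodDFA B).F j = if j.2 ∈ B.accept then A.F j.1 else 0 := fun _ => rfl
  have : (A.prodDFA B).massN n = ∑ i : A.Q × B.S, ∑ j : A.Q × B.S,
      (A.prodDFA B).I i * ((A.prodDFA B).Mat ^ n) i j *
        (if j.2 ∈ B.accept then A.F j.1 else 0) := by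
    show (∑ i : A.Q × B.S, ∑ j : A.Q × B.S,
      (A.prodDFA B).I i * ((A.prodDFA B).Mat ^ n) i j * (A.prodDFA B).F j) = _
    simp only [hF]
  rw [this]
  exact prod_massN_red A B n (fun q' s' => if s' ∈ B.accept then A.F q' else 0)

lemma massN_prod_le (A : WA V) (B : DFA' V) (n : ℕ) :
    (A.prodDFA B).massN n ≤ A.massN n := by
  rw [massN_prod, ← prod_sum3_full A B n]
  refine Finset.sum_le_sum fun q _ => Finset.sum_le_sum fun q' _ =>
    Finset.sum_le_sum fun s' _ => mul_le_mul' le_rfl ?_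
  split <;> simp

lemma WA.mass_prod_le (A : WA V) (B : DFA' V) : (A.prodDFA B).mass ≤ A.mass := by
  rw [WA.mass_eq', WA.mass_eq']
  exact ENNReal.tsum_le_tsum fun n => massN_prod_le A B n

lemma massN_prod_add (A : WA V) (B : DFA' V) (n : ℕ) :
    (A.prodDFA B).massN n + (A.prodDFA B.compl).massN n = A.massN n := by
  rw [massN_prod, massN_prod, ← prod_sum3_full A B n]
  have hc : (∑ q : A.Q, ∑ q' : A.Q, ∑ s' : B.compl.S,
        A.I q * ((A.prodDFA B.compl).Mat ^ n) (q, B.compl.start) (q', s') *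
          (if s' ∈ B.compl.accept then A.F q' else 0))
      = ∑ q : A.Q, ∑ q' : A.Q, ∑ s' : B.S,
          A.I q * ((A.prodDFA B).Mat ^ n) (q, B.start) (q', s') *
            (if s' ∉ B.accept then A.F q' else 0) := by
    refine Finset.sum_congr rfl fun q _ => Finset.sum_congr rfl fun q' _ =>
      Finset.sum_congr rfl fun s' _ => ?_
    congr 1
    by_cases h1 : s' ∈ B.compl.accept <;> by_cases h2 : s' ∈ B.accept
    · exact absurd h2 (Finset.mem_compl.mp h1)
    · simp only [h1, if_true]
      split_ifs with h3
      · exact absurd h3 h2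
      · rfl
    · simp only [h1, if_false]
      split_ifs with h3
      · rfl
      · exact absurd h2 h3
    · exact absurd (Finset.mem_compl.mpr h2) h1
  rw [hc]
  rw [← Finset.sum_add_distrib]
  refine Finset.sum_congr rfl fun q _ => ?_
  rw [← Finset.sum_add_distrib]
  refine Finset.sum_congr rfl fun q' _ => ?_
  rw [← Finset.sum_add_distrib]
  refine Finset.sum_congr rfl fun s' _ => ?_
  rw [← mul_add]
  congr 1
  by_cases h : s' ∈ B.accept
  · simp [h]
  · simp [h]

lemma WA.mass_prod_add (A : WA V) (B : DFA' V) :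
    (A.prodDFA B).mass + (A.prodDFA B.compl).mass = A.mass := by
  rw [WA.mass_eq', WA.mass_eq', WA.mass_eq', ← ENNReal.tsum_add]
  exact tsum_congr fun n => massN_prod_add A B n
lemma subst0_step_le (A : WA V) (X : V) (a b : A.Q) :
    (A.subst0 X).Mat a b ≤ (A.prodDFA (BXpos X).compl).Mat (a, false) (b, false) := by
  have hR : (A.prodDFA (BXpos X).compl).Mat (a, false) (b, false)
      = (match A.lab a b with
         | some X' => if (false : Bool) = (if X' = X then true else false) then A.w a b else 0
         | none => A.w a b) := rfl
  have hL : (A.subst0 X).Mat a b = if A.lab a b = some X then 0 else A.w a b := rfl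
  rw [hR, hL]
  rcases A.lab a b with _ | X'
  · simp
  · by_cases hx : X' = X <;> simp [hx]

lemma subst0_pow_le (A : WA V) (X : V) (n : ℕ) : ∀ q q' : A.Q,
    ((A.subst0 X).Mat ^ n) q q' ≤
      ((A.prodDFA (BXpos X).compl).Mat ^ n) (q, false) (q', false) := by
  induction n with
  | zero =>
    intro q q'
    rw [pow_zero, pow_zero]
    refine le_of_eq ((Matrix.one_apply).trans (Eq.trans ?_ (Matrix.one_apply).symm))
    by_cases h : q = q'
    · simp [h]
    · simp [h]
      exact (if_neg fun h' => h (congrArg Prod.fst h')).symm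
  | succ n ih =>
    intro q q'
    rw [pow_succ, pow_succ]
    refine (le_of_eq Matrix.mul_apply).trans (le_of_le_of_eq ?_ Matrix.mul_apply.symm)
    have expand : ∑ j : (A.prodDFA (BXpos X).compl).Q,
        ((A.prodDFA (BXpos X).compl).Mat ^ n) (q, false) j *
          (A.prodDFA (BXpos X).compl).Mat j (q', false)
        = ∑ q'' : A.Q, ∑ s'' : Bool,
            ((A.prodDFA (BXpos X).compl).Mat ^ n) (q, false) (q'', s'') *
              (A.prodDFA (BXpos X).compl).Mat (q'', s'') (q', false) :=
      Fintype.sum_prod_type _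
    rw [expand]
    refine Finset.sum_le_sum fun q'' _ => ?_
    calc ((A.subst0 X).Mat ^ n) q q'' * (A.subst0 X).Mat q'' q'
        ≤ ((A.prodDFA (BXpos X).compl).Mat ^ n) (q, false) (q'', false) *
            (A.prodDFA (BXpos X).compl).Mat (q'', false) (q', false) :=
          mul_le_mul' (ih q q'') (subst0_step_le A X q'' q')
      _ ≤ ∑ s'' : Bool, ((A.prodDFA (BXpos X).compl).Mat ^ n) (q, false) (q'', s'') *
            (A.prodDFA (BXpos X).compl).Mat (q'', s'') (q', false) :=
          Finset.single_le_sum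
            (f := fun s'' : Bool => ((A.prodDFA (BXpos X).compl).Mat ^ n) (q, false) (q'', s'') *
              (A.prodDFA (BXpos X).compl).Mat (q'', s'') (q', false))
            (fun i _ => zero_le) (Finset.mem_univ false)

lemma massN_subst0_le (A : WA V) (X : V) (n : ℕ) :
    (A.subst0 X).massN n ≤ (A.prodDFA (BXpos X).compl).massN n := by
  rw [massN_prod]
  show ∑ q : A.Q, ∑ q' : A.Q, A.I q * ((A.subst0 X).Mat ^ n) q q' * A.F q' ≤ _
  have hfmem : (false : Bool) ∈ (BXpos X).compl.accept := by
    exact Finset.mem_compl.mpr (by simp [BXpos])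
  refine Finset.sum_le_sum fun q _ => Finset.sum_le_sum fun q' _ => ?_
  calc A.I q * ((A.subst0 X).Mat ^ n) q q' * A.F q'
      ≤ A.I q * ((A.prodDFA (BXpos X).compl).Mat ^ n) (q, false) (q', false) *
          (if (false : Bool) ∈ (BXpos X).compl.accept then A.F q' else 0) := by
        rw [if_pos hfmem]
        exact mul_le_mul' (mul_le_mul' le_rfl (subst0_pow_le A X n q q')) le_rfl
    _ ≤ ∑ s' : Bool, A.I q *
          ((A.prodDFA (BXpos X).compl).Mat ^ n) (q, (BXpos X).compl.start) (q', s') *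
          (if s' ∈ (BXpos X).compl.accept then A.F q' else 0) :=
        Finset.single_le_sum
          (f := fun s' : Bool => A.I q *
            ((A.prodDFA (BXpos X).compl).Mat ^ n) (q, (BXpos X).compl.start) (q', s') *
            (if s' ∈ (BXpos X).compl.accept then A.F q' else 0))
          (fun i _ => zero_le) (Finset.mem_univ false)
  exact le_of_eq (Finset.sum_congr rfl fun s' _ => by congr)

lemma WA.mass_subst0_le (A : WA V) (X : V) :
    (A.subst0 X).mass ≤ (A.prodDFA (BXpos X).compl).mass := by
  rw [WA.mass_eq', WA.mass_eq']
  exact ENNReal.tsum_le_tsum fun n => massN_subst0_le A X n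

lemma WA.mass_decr (A : WA V) (X : V) : (A.decrA X).mass ≤ A.mass := by
  refine le_trans (WA.mass_wsum 1 1 _ _) ?_
  rw [one_mul, one_mul]
  have e1 := WA.mass_relabel (A.prodDFA (BXpos X)) (fun a b =>
    if a.2 = false ∧ b.2 = true ∧ (A.prodDFA (BXpos X)).lab a b = some X then none
    else (A.prodDFA (BXpos X)).lab a b)
  rw [e1]
  calc (A.prodDFA (BXpos X)).mass + (A.subst0 X).mass
      ≤ (A.prodDFA (BXpos X)).mass + (A.prodDFA (BXpos X).compl).mass :=
        add_le_add le_rfl (A.mass_subst0_le X)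
    _ = A.mass := A.mass_prod_add (BXpos X)
lemma chainW_star_le (m : ℕ) : ∀ i j : Fin (m + 1),
    mstar (Matrix.of fun i j : Fin (m + 1) => if (j : ℕ) = (i : ℕ) + 1 then (1 : ℝ≥0∞) else 0)
      i j ≤ if (i : ℕ) ≤ (j : ℕ) then 1 else 0 := by
  have key := mstar_le_fix
    (W := Matrix.of fun i j : Fin (m + 1) => if (j : ℕ) = (i : ℕ) + 1 then (1 : ℝ≥0∞) else 0)
    (X := Matrix.of fun i j : Fin (m + 1) => if (i : ℕ) ≤ (j : ℕ) then (1 : ℝ≥0∞) else 0) ?_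
  · exact fun i j => key i j
  intro i j
  rw [Matrix.add_apply, Matrix.one_apply, Matrix.mul_apply]
  simp only [Matrix.of_apply, ite_mul, one_mul, zero_mul]
  have hsum : (∑ l : Fin (m + 1), if (l : ℕ) = (i : ℕ) + 1 then
      (if (l : ℕ) ≤ (j : ℕ) then (1 : ℝ≥0∞) else 0) else 0)
      = if (i : ℕ) + 1 ≤ (j : ℕ) then 1 else 0 := by
    by_cases hi : (i : ℕ) < m
    · rw [Fintype.sum_eq_single (⟨(i : ℕ) + 1, by omega⟩ : Fin (m + 1))
        (fun b hb => by
          rw [if_neg]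
          intro hb'
          exact hb (Fin.ext hb'))]
      simp
    · rw [Finset.sum_eq_zero fun l _ => by
        rw [if_neg]
        intro h'
        have := l.isLt
        omega]
      have : ¬((i : ℕ) + 1 ≤ (j : ℕ)) := by have := j.isLt; omega
      rw [if_neg this]
  rw [hsum]
  by_cases hij : i = j
  · subst hij
    simp
  · have : ¬(i = j) := hij
    rw [if_neg this]
    rw [zero_add]
    by_cases h2 : (i : ℕ) + 1 ≤ (j : ℕ)
    · rw [if_pos h2, if_pos (by omega)]
    · rw [if_neg h2]
      exact zero_le

lemma mass_chainX_le (X : V) (n : ℕ) : (chainX X n).mass ≤ 1 := by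
  rw [WA.mass_eq_star]
  have hst : ∀ i j : Fin (n + 1), mstar (chainX X n).Mat i j ≤
      if (i : ℕ) ≤ (j : ℕ) then 1 else 0 := fun i j => chainW_star_le n i j
  calc ∑ q : Fin (n + 1), ∑ q' : Fin (n + 1),
        (chainX X n).I q * mstar (chainX X n).Mat q q' * (chainX X n).F q'
      ≤ ∑ q : Fin (n + 1), ∑ q' : Fin (n + 1),
        (chainX X n).I q * (if (q : ℕ) ≤ (q' : ℕ) then 1 else 0) * (chainX X n).F q' :=
        Finset.sum_le_sum fun q _ => Finset.sum_le_sum fun q' _ =>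
          mul_le_mul' (mul_le_mul' le_rfl (hst q q')) le_rfl
    _ ≤ 1 := by
        have hI : ∀ i : Fin (n + 1), (chainX X n).I i
            = if i = (⟨0, by omega⟩ : Fin (n + 1)) then 1 else 0 := fun _ => rfl
        have hF : ∀ i : Fin (n + 1), (chainX X n).F i
            = if i = Fin.last n then 1 else 0 := fun _ => rfl
        simp only [hI, hF, ite_mul, one_mul, zero_mul, mul_ite, mul_one, mul_zero,
          Finset.sum_ite_irrel, Finset.sum_const_zero, Finset.sum_ite_eq',
          Finset.mem_univ, if_true]
        refine le_trans (Finset.sum_le_sum (fun x _ =>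
          show (if (x : ℕ) ≤ ((Fin.last n : Fin (n + 1)) : ℕ) then
              (if x = (⟨0, by omega⟩ : Fin (n + 1)) then (1:ℝ≥0∞) else 0) else 0) ≤
              (if x = (⟨0, by omega⟩ : Fin (n + 1)) then (1:ℝ≥0∞) else 0) from by
            split_ifs <;> norm_num)) ?_
        rw [Fintype.sum_eq_single (⟨0, by omega⟩ : Fin (n + 1)) (fun b hb => if_neg hb)]
        simp

lemma mass_chainYX_le (Y X : V) : (chainYX Y X).mass ≤ 1 := by
  have h : (chainYX Y X).mass = (chainX X 2).mass := by
    rw [WA.mass_eq, WA.mass_eq]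
    rfl
  rw [h]
  exact mass_chainX_le X 2
lemma ReDiP.sem_mass_le (P : ReDiP V) : ∀ A : WA V, P.wf → (P.sem A).mass ≤ A.mass := by
  induction P with
  | setzero x =>
    intro A _
    exact le_of_eq (A.mass_subst1 x)
  | incrConst x n =>
    intro A _
    calc (A.concat (chainX x n)).mass ≤ A.mass * (chainX x n).mass := A.mass_concat _
      _ ≤ A.mass * 1 := mul_le_mul' le_rfl (mass_chainX_le x n)
      _ = A.mass := mul_one _
  | incrDist x D =>
    intro A hwf
    obtain ⟨hD, -⟩ := hwf
    calc (A.concat D).mass ≤ A.mass * D.mass := A.mass_concat D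
      _ = A.mass * 1 := by rw [hD]
      _ = A.mass := mul_one _
  | incrVar x y =>
    intro A _
    exact A.mass_tsubst y (chainYX y x) (mass_chainYX_le y x)
  | iid x D y =>
    intro A hwf
    obtain ⟨hD, -⟩ := hwf
    refine A.mass_tsubst y ((singleY y).concat D) ?_
    calc ((singleY y).concat D).mass ≤ (singleY y).mass * D.mass := WA.mass_concat _ _
      _ ≤ 1 * 1 := mul_le_mul' (mass_chainX_le y 1) (le_of_eq hD)
      _ = 1 := by norm_num
  | decr x =>
    intro A _
    exact A.mass_decr x
  | choice p P₁ P₂ ih₁ ih₂ =>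
    intro A hwf
    obtain ⟨hp, h1, h2⟩ := hwf
    calc (WA.wsum p (1 - p) (P₁.sem A) (P₂.sem A)).mass
        ≤ p * (P₁.sem A).mass + (1 - p) * (P₂.sem A).mass := WA.mass_wsum _ _ _ _
      _ ≤ p * A.mass + (1 - p) * A.mass :=
          add_le_add (mul_le_mul' le_rfl (ih₁ A h1)) (mul_le_mul' le_rfl (ih₂ A h2))
      _ = (p + (1 - p)) * A.mass := (add_mul _ _ _).symm
      _ = A.mass := by rw [add_tsub_cancel_of_le hp, one_mul]
  | ite φ P₁ P₂ ih₁ ih₂ =>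
    intro A hwf
    obtain ⟨h1, h2⟩ := hwf
    calc (WA.wsum 1 1 (P₁.sem (A.prodDFA φ.dfa))
          (P₂.sem (A.prodDFA (Guard.not φ).dfa))).mass
        ≤ 1 * (P₁.sem (A.prodDFA φ.dfa)).mass +
            1 * (P₂.sem (A.prodDFA (Guard.not φ).dfa)).mass := WA.mass_wsum _ _ _ _
      _ ≤ (A.prodDFA φ.dfa).mass + (A.prodDFA φ.dfa.compl).mass := by
          rw [one_mul, one_mul]
          exact add_le_add (ih₁ _ h1) (ih₂ _ h2)
      _ = A.mass := A.mass_prod_add φ.dfa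
  | observe φ =>
    intro A _
    exact A.mass_prod_le φ.dfa
  | seq P₁ P₂ ih₁ ih₂ =>
    intro A hwf
    obtain ⟨h1, h2⟩ := hwf
    exact le_trans (ih₂ (P₁.sem A) h2) (ih₁ A h1)

end WAMass

/-- the translation is an endofunction on PGA. -/
theorem stmt_12 (V : Type) [Fintype V] [DecidableEq V] (P : ReDiP V) (hP : P.wf)
    (A : WA V) (hA : A.mass ≤ 1) :
    (P.sem A).mass ≤ 1 := by
  exact le_trans (P.sem_mass_le A hP) hA
end

section
/- For every guard φ over V in which every constant occurring in an atom (the n of X < n and the m of X ≡ n mod m) is at most N, there exists a DFA over alphabet V with at most (N+1)^{a(φ)} states that accepts exactly the words w : List V whose Parikh image satisfies φ, where a(φ) is the number of atomic subformulas of φ. -/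
open scoped ENNReal
open Classical

variable {V : Type} [Fintype V] [DecidableEq V]

section Aux
variable {V : Type} [Fintype V] [DecidableEq V]

lemma ltDFA_foldl (X : V) (n : ℕ) (w : List V) (s : Fin (n + 1)) :
    (w.foldl (ltDFA X n).step s).1 = min (s.1 + w.count X) n := by
  induction w generalizing s with
  | nil => simp [ltDFA]; omega
  | cons a w ih =>
    show ((w.foldl (ltDFA X n).step ((ltDFA X n).step s a)).1 = _)
    rw [ih ((ltDFA X n).step s a), List.count_cons]
    have hs := s.isLt
    by_cases hax : a = X
    · subst hax
      simp only [ltDFA, if_pos rfl]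
      by_cases h : s.1 < n
      · simp [h]; omega
      · simp [h]; omega
    · have hx : ¬ (X = a) := fun h => hax h.symm
      simp [ltDFA, hax, hx]

lemma modDFA_foldl (X : V) (n m : ℕ) (h : n < m) (w : List V) (s : Fin m) :
    (w.foldl (modDFA X n m h).step s).1 = (s.1 + w.count X) % m := by
  induction w generalizing s with
  | nil => exact (Nat.mod_eq_of_lt s.isLt).symm
  | cons a w ih =>
    show ((w.foldl (modDFA X n m h).step ((modDFA X n m h).step s a)).1 = _)
    rw [ih ((modDFA X n m h).step s a), List.count_cons]
    by_cases hax : a = X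
    · subst hax
      show (((modDFA a n m h).step s a).1 + w.count a) % m = _
      have hstep : ((modDFA a n m h).step s a).1 = (s.1 + 1) % m := by
        simp [modDFA]
      rw [hstep, Nat.mod_add_mod]
      congr 1
      have hone : (if (a == a) = true then 1 else 0) = 1 := by simp
      omega
    · have hx : ¬ (X = a) := fun h => hax h.symm
      simp [modDFA, hax, hx]

lemma inter_foldl (B C : DFA' V) (w : List V) (s : B.S) (t : C.S) :
    w.foldl (B.inter C).step (s, t) = (w.foldl B.step s, w.foldl C.step t) := by
  induction w generalizing s t with
  | nil => rfl
  | cons a w ih => exact ih (B.step s a) (C.step t a)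

end Aux

theorem stmt_14' (V : Type) [Fintype V] [DecidableEq V] (φ : Guard V) (N : ℕ)
    (hφ : φ.constLe N) :
    ∃ B : DFA' V, Nat.card B.S ≤ (N + 1) ^ φ.atoms ∧
      ∀ w : List V, B.Accepts w ↔ φ.sat (parikhWord w) := by
  induction φ with
  | lt X n =>
    have hn : n ≤ N := hφ
    refine ⟨ltDFA X n, ?_, fun w => ?_⟩
    · simp [ltDFA, Guard.atoms]
      omega
    · have hfd := ltDFA_foldl X n w (ltDFA X n).start
      have hst : ((ltDFA X n).start).1 = 0 := rfl
      rw [hst] at hfd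
      show w.foldl (ltDFA X n).step (ltDFA X n).start ∈ (ltDFA X n).accept ↔ _
      rw [show (ltDFA X n).accept = Finset.univ.filter (fun s => s.1 < n) from rfl,
        Finset.mem_filter]
      simp only [Finset.mem_univ, true_and, Guard.sat, parikhWord]
      omega
  | mod X n m h =>
    obtain ⟨hn, hm⟩ := hφ
    refine ⟨modDFA X n m h, ?_, fun w => ?_⟩
    · simp [modDFA, Guard.atoms]; omega
    · have hfd := modDFA_foldl X n m h w (modDFA X n m h).start
      have hst : ((modDFA X n m h).start).1 = 0 := rfl
      rw [hst] at hfd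
      show w.foldl (modDFA X n m h).step (modDFA X n m h).start ∈ (modDFA X n m h).accept ↔ _
      change (w.foldl (modDFA X n m h).step (modDFA X n m h).start : Fin m) ∈
        ({⟨n, h⟩} : Finset (Fin m)) ↔ _
      rw [Finset.mem_singleton, Fin.ext_iff]
      simp only [zero_add] at hfd
      show _ = n ↔ List.count X w % m = n
      rw [← hfd]
      exact Iff.rfl
  | and g₁ g₂ ih₁ ih₂ =>
    obtain ⟨h₁, h₂⟩ := hφ
    obtain ⟨B₁, hc₁, hw₁⟩ := ih₁ h₁
    obtain ⟨B₂, hc₂, hw₂⟩ := ih₂ h₂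
    refine ⟨B₁.inter B₂, ?_, fun w => ?_⟩
    · have : Nat.card (B₁.inter B₂).S = Nat.card B₁.S * Nat.card B₂.S := by
        simp [DFA'.inter, Nat.card_prod]
      rw [this, Guard.atoms, pow_add]
      exact Nat.mul_le_mul hc₁ hc₂
    · show w.foldl (B₁.inter B₂).step (B₁.inter B₂).start ∈ (B₁.inter B₂).accept ↔ _
      rw [show (B₁.inter B₂).start = (B₁.start, B₂.start) from rfl, inter_foldl]
      change ((w.foldl B₁.step B₁.start, w.foldl B₂.step B₂.start) : B₁.S × B₂.S) ∈
        B₁.accept ×ˢ B₂.accept ↔ _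
      rw [Finset.mem_product]
      exact and_congr (hw₁ w) (hw₂ w)
  | not g ih =>
    obtain ⟨B, hc, hw⟩ := ih hφ
    refine ⟨B.compl, by simpa [DFA'.compl, Guard.atoms] using hc, fun w => ?_⟩
    simp only [DFA'.Accepts, DFA'.compl, Finset.mem_compl, Guard.sat, ← hw w]
    exact Finset.mem_compl


/-- every guard with constants at most `N` is modeled by a DFA with at most
`(N+1)^{a(φ)}` states. -/
theorem stmt_14 (V : Type) [Fintype V] [DecidableEq V] (φ : Guard V) (N : ℕ)
    (hφ : φ.constLe N) :
    ∃ B : DFA' V, Nat.card B.S ≤ (N + 1) ^ φ.atoms ∧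
      ∀ w : List V, B.Accepts w ↔ φ.sat (parikhWord w) := 
  stmt_14' V φ N hφ
end
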